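/- For every unitary matrix U = A + iB ∈ U(d,ℂ) (A = Re U, B = Im U real d×d matrices) there exist real orthogonal matrices W, V ∈ O(d,ℝ) and a diagonal unitary matrix Σ = Σ_r + iΣ_i ∈ U(d,ℂ) such that U = W · Σ · Vᵀ; equivalently, A = W Σ_r Vᵀ and B = W Σ_i Vᵀ. -/

import Mathlib

open Matrix Module.End LinearMap


section Plumbing

variable {d : ℕ}

/-- Entrywise inclusion of real matrices into complex matrices. -/
noncomputable def toC (M : Matrix (Fin d) (Fin d) ℝ) : Matrix (Fin d) (Fin d) ℂ :=
  M.map (fun x : ℝ => (x : ℂ))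

/-- Entrywise complex conjugation of complex matrices. -/
noncomputable def cj (M : Matrix (Fin d) (Fin d) ℂ) : Matrix (Fin d) (Fin d) ℂ :=
  M.map (starRingEnd ℂ)

lemma toC_mul (M N : Matrix (Fin d) (Fin d) ℝ) : toC (M * N) = toC M * toC N :=
  Matrix.map_mul (f := Complex.ofRealHom)

lemma toC_one : toC (1 : Matrix (Fin d) (Fin d) ℝ) = 1 :=
  Matrix.map_one _ Complex.ofReal_zero Complex.ofReal_one

lemma toC_add (M N : Matrix (Fin d) (Fin d) ℝ) : toC (M + N) = toC M + toC N := by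
  ext i j; simp [toC]

lemma toC_sub (M N : Matrix (Fin d) (Fin d) ℝ) : toC (M - N) = toC M - toC N := by
  ext i j; simp [toC]

lemma toC_neg (M : Matrix (Fin d) (Fin d) ℝ) : toC (-M) = -toC M := by
  ext i j; simp [toC]

lemma toC_zero : toC (0 : Matrix (Fin d) (Fin d) ℝ) = 0 := by
  ext i j; simp [toC]

lemma toC_transpose (M : Matrix (Fin d) (Fin d) ℝ) : toC Mᵀ = (toC M)ᵀ := by
  ext i j; simp [toC]

lemma toC_diagonal (r : Fin d → ℝ) :
    toC (diagonal r) = diagonal (fun j => (r j : ℂ)) :=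
  Matrix.diagonal_map Complex.ofReal_zero

lemma toC_inj {M N : Matrix (Fin d) (Fin d) ℝ} (h : toC M = toC N) : M = N := by
  ext i j
  have := congrFun (congrFun h i) j
  simpa [toC] using this

lemma cj_mul (M N : Matrix (Fin d) (Fin d) ℂ) : cj (M * N) = cj M * cj N :=
  Matrix.map_mul (f := (starRingEnd ℂ))

lemma cj_one : cj (1 : Matrix (Fin d) (Fin d) ℂ) = 1 :=
  Matrix.map_one _ (map_zero _) (map_one _)

lemma cj_cj (M : Matrix (Fin d) (Fin d) ℂ) : cj (cj M) = M := by
  ext i j; simp [cj]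

lemma cj_toC (M : Matrix (Fin d) (Fin d) ℝ) : cj (toC M) = toC M := by
  ext i j; simp [cj, toC]

lemma star_eq_cj_transpose (M : Matrix (Fin d) (Fin d) ℂ) : star M = cj Mᵀ := by
  ext i j
  rw [Matrix.star_apply]
  rfl

lemma star_toC (M : Matrix (Fin d) (Fin d) ℝ) : star (toC M) = toC Mᵀ := by
  rw [star_eq_cj_transpose, ← toC_transpose, cj_toC]

lemma split_re_im (M : Matrix (Fin d) (Fin d) ℂ) :
    M = toC (M.map Complex.re) + Complex.I • toC (M.map Complex.im) := by
  ext i j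
  simp only [toC, Matrix.add_apply, Matrix.smul_apply, Matrix.map_apply, smul_eq_mul]
  rw [mul_comm, Complex.re_add_im]

lemma re_im_unique {A B C D : Matrix (Fin d) (Fin d) ℝ}
    (h : toC A + Complex.I • toC B = toC C + Complex.I • toC D) : A = C ∧ B = D := by
  constructor <;> ext i j <;>
  · have := congrFun (congrFun h i) j
    simp only [toC, Matrix.add_apply, Matrix.smul_apply, Matrix.map_apply, smul_eq_mul,
      Complex.ext_iff] at this
    simp [Complex.mul_re, Complex.mul_im] at this
    tauto

lemma mul_split (A B C D : Matrix (Fin d) (Fin d) ℝ) :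
    (toC A + Complex.I • toC B) * (toC C + Complex.I • toC D) =
      toC (A * C - B * D) + Complex.I • toC (A * D + B * C) := by
  rw [toC_sub, toC_add, toC_mul, toC_mul, toC_mul, toC_mul]
  rw [add_mul, mul_add, mul_add]
  simp only [smul_mul_assoc, mul_smul_comm, smul_smul, Complex.I_mul_I, neg_smul, one_smul,
    smul_add]
  abel

lemma map_re_real_mul (A : Matrix (Fin d) (Fin d) ℝ) (M : Matrix (Fin d) (Fin d) ℂ) :
    (toC A * M).map Complex.re = A * M.map Complex.re := by
  ext i j
  simp [toC, Matrix.mul_apply, Complex.re_sum, Complex.mul_re]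

lemma map_im_real_mul (A : Matrix (Fin d) (Fin d) ℝ) (M : Matrix (Fin d) (Fin d) ℂ) :
    (toC A * M).map Complex.im = A * M.map Complex.im := by
  ext i j
  simp [toC, Matrix.mul_apply, Complex.im_sum, Complex.mul_im]

lemma map_re_mul_real (M : Matrix (Fin d) (Fin d) ℂ) (B : Matrix (Fin d) (Fin d) ℝ) :
    (M * toC B).map Complex.re = M.map Complex.re * B := by
  ext i j
  simp [toC, Matrix.mul_apply, Complex.re_sum, Complex.mul_re]

lemma map_im_mul_real (M : Matrix (Fin d) (Fin d) ℂ) (B : Matrix (Fin d) (Fin d) ℝ) :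
    (M * toC B).map Complex.im = M.map Complex.im * B := by
  ext i j
  simp [toC, Matrix.mul_apply, Complex.im_sum, Complex.mul_im]

end Plumbing


/-- Simultaneous orthogonal diagonalization of two commuting real symmetric matrices. -/
theorem joint_diag {d : ℕ} (P Q : Matrix (Fin d) (Fin d) ℝ)
    (hP : Pᵀ = P) (hQ : Qᵀ = Q) (hPQ : P * Q = Q * P) :
    ∃ W : Matrix (Fin d) (Fin d) ℝ, W ∈ Matrix.orthogonalGroup (Fin d) ℝ ∧
      ∃ p q : Fin d → ℝ, P = W * diagonal p * Wᵀ ∧ Q = W * diagonal q * Wᵀ := by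
  classical
  have hP' : P.IsHermitian := by
    rwa [Matrix.IsHermitian, conjTranspose_eq_transpose_of_trivial]
  have hQ' : Q.IsHermitian := by
    rwa [Matrix.IsHermitian, conjTranspose_eq_transpose_of_trivial]
  set A := Matrix.toEuclideanLin P with hAdef
  set B := Matrix.toEuclideanLin Q with hBdef
  have hAs : A.IsSymmetric := Matrix.isHermitian_iff_isSymmetric.1 hP'
  have hBs : B.IsSymmetric := Matrix.isHermitian_iff_isSymmetric.1 hQ'
  have hmul : ∀ (M N : Matrix (Fin d) (Fin d) ℝ),
      Matrix.toEuclideanLin (M * N) = Matrix.toEuclideanLin M * Matrix.toEuclideanLin N := by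
    intro M N
    refine LinearMap.ext fun v => ?_
    simp [Matrix.toEuclideanLin_apply, Module.End.mul_apply, mulVec_mulVec]
  have hcomm : Commute A B := by
    rw [Commute, SemiconjBy, hAdef, hBdef, ← hmul, ← hmul, hPQ]
  set E := EuclideanSpace ℝ (Fin d)
  set V : Module.End.Eigenvalues A × Module.End.Eigenvalues B → Submodule ℝ E :=
    fun μ => eigenspace A μ.1.1 ⊓ eigenspace B μ.2.1 with hV
  have horth : OrthogonalFamily ℝ (fun μ => V μ) (fun μ => (V μ).subtypeₗᵢ) := by
    have h0 := LinearMap.IsSymmetric.orthogonalFamily_eigenspace_inf_eigenspace hAs hBs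
    have := h0.comp
      (f := fun μ : Module.End.Eigenvalues A × Module.End.Eigenvalues B => (μ.2.1, μ.1.1))
      (fun x y hxy => by
        have h1 : x.2.1 = y.2.1 := congrArg Prod.fst hxy
        have h2 : x.1.1 = y.1.1 := congrArg Prod.snd hxy
        exact Prod.ext (Subtype.ext h2) (Subtype.ext h1))
    exact this
  have hinternal : DirectSum.IsInternal V := by
    refine horth.isInternal_iff.mpr ?_
    rw [Submodule.orthogonal_eq_bot_iff]
    rw [eq_top_iff,
      ← LinearMap.IsSymmetric.iSup_iSup_eigenspace_inf_eigenspace_eq_top_of_commute hAs hBs hcomm]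
    refine iSup_le fun α => iSup_le fun γ => ?_
    by_cases hα : Module.End.HasEigenvalue A α
    · by_cases hγ : Module.End.HasEigenvalue B γ
      · exact le_iSup_of_le (⟨⟨α, hα⟩, ⟨γ, hγ⟩⟩) le_rfl
      · have h0 : eigenspace B γ = ⊥ := by
          rwa [Module.End.hasEigenvalue_iff, not_not] at hγ
        rw [h0, inf_bot_eq]; exact bot_le
    · have h0 : eigenspace A α = ⊥ := by
        rwa [Module.End.hasEigenvalue_iff, not_not] at hα
      rw [h0, bot_inf_eq]; exact bot_le
  have hn : Module.finrank ℝ E = d := finrank_euclideanSpace_fin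
  set b := hinternal.subordinateOrthonormalBasis hn horth with hb
  set idx := fun j : Fin d => hinternal.subordinateOrthonormalBasisIndex hn j horth with hidx
  have hmem : ∀ j, b j ∈ V (idx j) :=
    fun j => hinternal.subordinateOrthonormalBasis_subordinate hn j horth
  have hAb : ∀ j, A (b j) = (idx j).1.1 • b j :=
    fun j => mem_eigenspace_iff.1 (hmem j).1
  have hBb : ∀ j, B (b j) = (idx j).2.1 • b j :=
    fun j => mem_eigenspace_iff.1 (hmem j).2
  -- the matrix part
  set W : Matrix (Fin d) (Fin d) ℝ :=
    (EuclideanSpace.basisFun (Fin d) ℝ).toBasis.toMatrix b.toBasis with hWdef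
  have hWmem : W ∈ Matrix.orthogonalGroup (Fin d) ℝ :=
    (EuclideanSpace.basisFun (Fin d) ℝ).toMatrix_orthonormalBasis_mem_unitary b
  have hWst : star W = Wᵀ := by
    rw [star_eq_conjTranspose, conjTranspose_eq_transpose_of_trivial]
  have hW1 : W * Wᵀ = 1 := by rw [← hWst]; exact (mem_orthogonalGroup_iff _ _).1 hWmem
  have hW2 : Wᵀ * W = 1 := by rw [← hWst]; exact (mem_orthogonalGroup_iff' _ _).1 hWmem
  have hWsingle : ∀ j, W *ᵥ Pi.single j 1 = ⇑(b j) := by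
    intro j
    simp only [mulVec_single, mul_one]
    rw [MulOpposite.op_one, one_smul]
    rfl
  have hWtb : ∀ j, Wᵀ *ᵥ ⇑(b j) = Pi.single j 1 := by
    intro j
    rw [← hWsingle, mulVec_mulVec, hW2, one_mulVec]
  have key : ∀ (M : Matrix (Fin d) (Fin d) ℝ) (r : Fin d → ℝ),
      (∀ j, Matrix.toEuclideanLin M (b j) = r j • b j) → M = W * diagonal r * Wᵀ := by
    intro M r hMb
    have hMbv : ∀ j, M *ᵥ ⇑(b j) = r j • ⇑(b j) := by
      intro j
      exact (by simpa only [toEuclideanLin_apply] using congr(⇑$(hMb j)) :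
        M *ᵥ ⇑(b j) = (r j • b j).ofLp)
    have hdiag : Wᵀ * M * W = diagonal r := by
      apply Matrix.toEuclideanLin.injective
      apply Module.Basis.ext (EuclideanSpace.basisFun (Fin d) ℝ).toBasis
      intro i
      simp only [toEuclideanLin_apply, OrthonormalBasis.coe_toBasis, EuclideanSpace.basisFun_apply,
        PiLp.ofLp_single, ← mulVec_mulVec, hWsingle, hMbv, Matrix.diagonal_mulVec_single,
        mulVec_smul, hWtb, WithLp.toLp_smul, PiLp.toLp_single, mul_one]
      apply PiLp.ext
      intro j
      simp only [PiLp.smul_apply, EuclideanSpace.single_apply, smul_eq_mul, mul_ite, mul_one,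
        mul_zero]
    rw [← hdiag, ← Matrix.mul_assoc, ← Matrix.mul_assoc, hW1, Matrix.one_mul, Matrix.mul_assoc,
      hW1, Matrix.mul_one]
  exact ⟨W, hWmem, (fun j => (idx j).1.1), (fun j => (idx j).2.1), key P _ hAb, key Q _ hBb⟩


/-- Joint real singular value decomposition of a unitary matrix:
`U = W Σ Vᵀ` with `W, V` real orthogonal and `Σ` diagonal unitary; equivalently
`Re U = W Σ_r Vᵀ` and `Im U = W Σ_i Vᵀ`. -/
theorem unitary_real_svd (d : ℕ) (U : Matrix (Fin d) (Fin d) ℂ)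
    (hU : U ∈ Matrix.unitaryGroup (Fin d) ℂ) :
    ∃ (W V : Matrix (Fin d) (Fin d) ℝ) (σ : Fin d → ℂ),
      W ∈ Matrix.orthogonalGroup (Fin d) ℝ ∧ V ∈ Matrix.orthogonalGroup (Fin d) ℝ ∧
      (∀ j, ‖σ j‖ = 1) ∧
      U = W.map (fun x : ℝ => (x : ℂ)) * diagonal σ * (Vᵀ).map (fun x : ℝ => (x : ℂ)) ∧
      U.map Complex.re = W * diagonal (fun j => (σ j).re) * Vᵀ ∧
      U.map Complex.im = W * diagonal (fun j => (σ j).im) * Vᵀ := by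
  classical
  have hU1 : star U * U = 1 := (Matrix.mem_unitaryGroup_iff').1 hU
  have hU2 : U * star U = 1 := (Matrix.mem_unitaryGroup_iff).1 hU
  have hsU : star U = cj Uᵀ := star_eq_cj_transpose U
  have hUtUc : Uᵀ * cj U = 1 := by
    have h := congrArg cj hU1
    rwa [cj_mul, hsU, cj_cj, cj_one] at h
  have hUcUt : cj U * Uᵀ = 1 := by
    have h := congrArg cj hU2
    rwa [cj_mul, hsU, cj_cj, cj_one] at h
  set Z := U * Uᵀ with hZdef
  have hZt : Zᵀ = Z := by rw [hZdef, Matrix.transpose_mul, Matrix.transpose_transpose]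
  have hsZ : star Z = cj U * cj Uᵀ := by
    rw [star_eq_cj_transpose, hZt, hZdef, cj_mul]
  have hZsZ : star Z * Z = 1 := by
    rw [hsZ, hZdef]
    calc cj U * cj Uᵀ * (U * Uᵀ) = cj U * ((cj Uᵀ * U) * Uᵀ) := by
          simp only [Matrix.mul_assoc]
      _ = cj U * Uᵀ := by rw [← hsU, hU1, Matrix.one_mul]
      _ = 1 := hUcUt
  have hZZs : Z * star Z = 1 := by
    rw [hsZ, hZdef]
    calc U * Uᵀ * (cj U * cj Uᵀ) = U * ((Uᵀ * cj U) * cj Uᵀ) := by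
          simp only [Matrix.mul_assoc]
      _ = U * cj Uᵀ := by rw [hUtUc, Matrix.one_mul]
      _ = 1 := by rw [← hsU, hU2]
  set P := Z.map Complex.re with hPdef
  set Q := Z.map Complex.im with hQdef
  have hsplit : Z = toC P + Complex.I • toC Q := split_re_im Z
  have hZsymm : ∀ i j, Z j i = Z i j := fun i j => congrFun (congrFun hZt i) j
  have hPt : Pᵀ = P := by
    ext i j
    simp only [Matrix.transpose_apply, hPdef, Matrix.map_apply]
    exact congrArg Complex.re (hZsymm i j)
  have hQt : Qᵀ = Q := by
    ext i j
    simp only [Matrix.transpose_apply, hQdef, Matrix.map_apply]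
    exact congrArg Complex.im (hZsymm i j)
  have hsZsplit : star Z = toC P + Complex.I • toC (-Q) := by
    rw [star_eq_cj_transpose, hZt]
    ext i j
    simp only [cj, toC, Matrix.map_apply, Matrix.add_apply, Matrix.smul_apply, smul_eq_mul,
      Matrix.neg_apply, Complex.ofReal_neg, hPdef, hQdef]
    simp [Complex.ext_iff]
  have hcommPQ : P * Q = Q * P := by
    have h := hZsZ
    rw [hsZsplit] at h
    rw [hsplit] at h
    rw [mul_split] at h
    have h1 : (1 : Matrix (Fin d) (Fin d) ℂ) =
        toC (1 : Matrix (Fin d) (Fin d) ℝ) + Complex.I • toC (0 : Matrix (Fin d) (Fin d) ℝ) := by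
      rw [toC_one, toC_zero, smul_zero, add_zero]
    rw [h1] at h
    obtain ⟨h2, h3⟩ := re_im_unique h
    have h4 : P * Q - Q * P = 0 := by
      rw [← h3]; rw [neg_mul]; abel
    exact sub_eq_zero.mp h4
  obtain ⟨W, hWmem, p, q, hPW, hQW⟩ := joint_diag P Q hPt hQt hcommPQ
  have hWst : star W = Wᵀ := by
    rw [star_eq_conjTranspose, conjTranspose_eq_transpose_of_trivial]
  have hW1 : W * Wᵀ = 1 := by rw [← hWst]; exact (mem_orthogonalGroup_iff _ _).1 hWmem
  have hW2 : Wᵀ * W = 1 := by rw [← hWst]; exact (mem_orthogonalGroup_iff' _ _).1 hWmem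
  have hWc1 : toC W * toC Wᵀ = 1 := by rw [← toC_mul, hW1, toC_one]
  have hWc2 : toC Wᵀ * toC W = 1 := by rw [← toC_mul, hW2, toC_one]
  have cW : ∀ X : Matrix (Fin d) (Fin d) ℂ, toC W * (toC Wᵀ * X) = X := fun X => by
    rw [← Matrix.mul_assoc, hWc1, Matrix.one_mul]
  have cWt : ∀ X : Matrix (Fin d) (Fin d) ℂ, toC Wᵀ * (toC W * X) = X := fun X => by
    rw [← Matrix.mul_assoc, hWc2, Matrix.one_mul]
  set δ : Fin d → ℂ := fun j => (p j : ℂ) + (q j : ℂ) * Complex.I with hδdef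
  have hdiagδ : diagonal δ = toC (diagonal p) + Complex.I • toC (diagonal q) := by
    rw [toC_diagonal, toC_diagonal]
    ext i j
    by_cases hij : i = j <;> simp [Matrix.diagonal, hij, hδdef, mul_comm]
  have hZW : Z = toC W * diagonal δ * toC Wᵀ := by
    rw [hsplit, hPW, hQW, hdiagδ]
    rw [toC_mul, toC_mul, toC_mul, toC_mul]
    simp only [Matrix.mul_add, Matrix.add_mul, Matrix.mul_smul, Matrix.smul_mul,
      mul_smul_comm, smul_mul_assoc]
  have hD : diagonal δ = toC Wᵀ * Z * toC W := by
    have hassoc : toC Wᵀ * (toC W * diagonal δ * toC Wᵀ) * toC W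
        = toC Wᵀ * toC W * diagonal δ * (toC Wᵀ * toC W) := by
      simp only [Matrix.mul_assoc]
    rw [hZW, hassoc, hWc2, Matrix.one_mul, Matrix.mul_one]
  have hδnorm : ∀ j, ‖δ j‖ = 1 := by
    have h1 : star (diagonal δ) * diagonal δ = 1 := by
      rw [hD]
      rw [StarMul.star_mul, StarMul.star_mul, star_toC, star_toC, Matrix.transpose_transpose]
      simp only [Matrix.mul_assoc]
      rw [cW]
      rw [← Matrix.mul_assoc (star Z), hZsZ, Matrix.one_mul]
      exact hWc2
    intro j
    rw [star_eq_conjTranspose, Matrix.diagonal_conjTranspose,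
      Matrix.diagonal_mul_diagonal] at h1
    have h2 := congrFun (congrFun h1 j) j
    simp only [Matrix.diagonal_apply_eq, Matrix.one_apply_eq, Pi.mul_apply, Pi.star_apply] at h2
    have h3 : Complex.normSq (δ j) = 1 := by
      have h4 : (starRingEnd ℂ) (δ j) * δ j = 1 := h2
      rw [mul_comm, Complex.mul_conj] at h4
      exact_mod_cast h4
    rw [Complex.norm_def, h3, Real.sqrt_one]
  choose σ hσ2 using fun j => IsAlgClosed.exists_pow_nat_eq (δ j) zero_lt_two
  have hσnorm : ∀ j, ‖σ j‖ = 1 := by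
    intro j
    have h1 : ‖σ j‖ ^ 2 = 1 := by rw [← norm_pow, hσ2, hδnorm]
    nlinarith [norm_nonneg (σ j)]
  have hσc : ∀ j, σ j * (starRingEnd ℂ) (σ j) = 1 := by
    intro j
    rw [Complex.mul_conj]
    have h1 : Complex.normSq (σ j) = 1 := by
      rw [Complex.normSq_eq_norm_sq, hσnorm]; norm_num
    rw [h1]; norm_num
  have hσc' : ∀ j, (starRingEnd ℂ) (σ j) * σ j = 1 := fun j => by
    rw [mul_comm]; exact hσc j
  set Sm := diagonal σ with hSm
  set Ss := diagonal (fun j => (starRingEnd ℂ) (σ j)) with hSs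
  have hS1 : Sm * Ss = 1 := by
    rw [hSm, hSs, Matrix.diagonal_mul_diagonal]
    have h1 : (fun j => σ j * (starRingEnd ℂ) (σ j)) = fun _ => (1 : ℂ) := funext hσc
    rw [h1, Matrix.diagonal_one]
  have hS2 : Ss * Sm = 1 := by
    rw [hSm, hSs, Matrix.diagonal_mul_diagonal]
    have h1 : (fun j => (starRingEnd ℂ) (σ j) * σ j) = fun _ => (1 : ℂ) := funext hσc'
    rw [h1, Matrix.diagonal_one]
  have hkey : diagonal δ * (toC Wᵀ * cj U) = toC Wᵀ * U := by
    have hZcU : Z * cj U = U := by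
      rw [hZdef, Matrix.mul_assoc, hUtUc, Matrix.mul_one]
    rw [hD]
    simp only [Matrix.mul_assoc]
    rw [cW, hZcU]
  set Y := Ss * (toC Wᵀ * U) with hYdef
  have hsSs : star Ss = Sm := by
    rw [hSs, hSm, star_eq_conjTranspose, Matrix.diagonal_conjTranspose]
    have h1 : (star fun j => (starRingEnd ℂ) (σ j)) = σ := by
      funext j
      exact star_star (σ j)
    rw [h1]
  have hsSm : star Sm = Ss := by
    rw [hSs, hSm, star_eq_conjTranspose, Matrix.diagonal_conjTranspose]
    rfl
  have hsd : Ss * diagonal δ = Sm := by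
    rw [hSs, hSm, Matrix.diagonal_mul_diagonal]
    have h1 : (fun i => (starRingEnd ℂ) (σ i) * δ i) = σ := by
      funext j
      rw [← hσ2 j, pow_two, ← mul_assoc, hσc' j, one_mul]
    rw [h1]
  have hYconj : cj Y = Y := by
    have hcjSs : cj Ss = Sm := by
      rw [hSs, hSm]
      ext i j
      by_cases hij : i = j <;> simp [cj, Matrix.diagonal, hij]
    have hl : cj Y = Sm * (toC Wᵀ * cj U) := by
      rw [hYdef, cj_mul, cj_mul, hcjSs, cj_toC]
    have hr : Y = Sm * (toC Wᵀ * cj U) := by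
      rw [hYdef, ← hkey, ← Matrix.mul_assoc, hsd]
    rw [hl, ← hr]
  set Vt := Y.map Complex.re with hVtdef
  have hYtoC : Y = toC Vt := by
    ext i j
    have h := congrFun (congrFun hYconj i) j
    simp only [cj, Matrix.map_apply] at h
    simp only [toC, hVtdef, Matrix.map_apply]
    have him : (Y i j).im = 0 := by
      have h2 := congrArg Complex.im h
      simp only [Complex.conj_im] at h2
      linarith
    rw [Complex.ext_iff]
    exact ⟨(Complex.ofReal_re _).symm, by rw [Complex.ofReal_im, him]⟩
  have hstarY : star Y = star U * (toC W * Sm) := by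
    rw [hYdef, StarMul.star_mul, StarMul.star_mul, star_toC, Matrix.transpose_transpose, hsSs,
      Matrix.mul_assoc]
  have hYunit1 : star Y * Y = 1 := by
    rw [hstarY, hYdef]
    simp only [Matrix.mul_assoc]
    rw [← Matrix.mul_assoc Sm, hS1, Matrix.one_mul]
    rw [← Matrix.mul_assoc (toC W), hWc1, Matrix.one_mul]
    exact hU1
  have hYunit2 : Y * star Y = 1 := by
    rw [hstarY, hYdef]
    simp only [Matrix.mul_assoc]
    rw [← Matrix.mul_assoc U, hU2, Matrix.one_mul]
    rw [← Matrix.mul_assoc (toC Wᵀ), hWc2, Matrix.one_mul]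
    exact hS2
  have hVt1 : Vtᵀ * Vt = 1 := by
    apply toC_inj
    rw [toC_mul, ← star_toC, ← hYtoC, hYunit1, toC_one]
  have hVt2 : Vt * Vtᵀ = 1 := by
    apply toC_inj
    rw [toC_mul, ← star_toC, ← hYtoC, hYunit2, toC_one]
  have hVmem : Vtᵀ ∈ Matrix.orthogonalGroup (Fin d) ℝ := by
    refine (mem_orthogonalGroup_iff _ _).2 ?_
    have hstV : star Vtᵀ = Vt := by
      rw [star_eq_conjTranspose, conjTranspose_eq_transpose_of_trivial,
        Matrix.transpose_transpose]
    rw [Matrix.transpose_transpose]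
    exact hVt1
  have hUfact : U = toC W * diagonal σ * toC Vt := by
    rw [← hSm, ← hYtoC, Matrix.mul_assoc, hYdef]
    rw [← Matrix.mul_assoc Sm, hS1, Matrix.one_mul, ← Matrix.mul_assoc (toC W), hWc1,
      Matrix.one_mul]
  refine ⟨W, Vtᵀ, σ, hWmem, hVmem, hσnorm, ?_, ?_, ?_⟩
  · show U = toC W * diagonal σ * toC Vtᵀᵀ
    rwa [Matrix.transpose_transpose]
  · show U.map Complex.re = W * diagonal (fun j => (σ j).re) * Vtᵀᵀ
    rw [Matrix.transpose_transpose, hUfact, map_re_mul_real, map_re_real_mul,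
      Matrix.diagonal_map Complex.zero_re]
  · show U.map Complex.im = W * diagonal (fun j => (σ j).im) * Vtᵀᵀ
    rw [Matrix.transpose_transpose, hUfact, map_im_mul_real, map_im_real_mul,
      Matrix.diagonal_map Complex.zero_im]
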